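/- Let H be a [3]-graph and C = v_1, e_1, ..., v_ℓ, e_ℓ, v_1 a Berge cycle in H. For any set X ⊆ V(C) and any edge e of H, the number of pairs {v_i, v_j} ⊆ X with e ∈ R(v_i, v_j) is at most |X| − 1. -/

import Mathlib

/-- Two vertices are adjacent in the hypergraph with edge set `H`
if some edge contains both of them. -/
def HAdj {V : Type*} (H : Finset (Finset V)) (u v : V) : Prop :=
  u ≠ v ∧ ∃ e ∈ H, u ∈ e ∧ v ∈ e

/-- The degree of `u` in the 2-shadow `∂H`: the number of vertices adjacent to `u`. -/
noncomputable def shadowDeg {V : Type*} (H : Finset (Finset V)) (u : V) : ℕ :=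
  {v | HAdj H u v}.ncard

/-- A `[3]`-graph: every edge has exactly 2 or 3 vertices. -/
def IsThreeGraph {V : Type*} (H : Finset (Finset V)) : Prop :=
  ∀ e ∈ H, e.card = 2 ∨ e.card = 3

/-- A Berge cycle of length `t` in the hypergraph with edge set `H`:
`t` distinct vertices `vtx i` and `t` distinct edges `edge i` (indices mod `t`)
with `{vtx i, vtx (i+1)} ⊆ edge i` for every `i`. -/
structure BergeCycle {V : Type*} (H : Finset (Finset V)) (t : ℕ) where
  vtx : ZMod t → V
  edge : ZMod t → Finset V
  vtx_inj : Function.Injective vtx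
  edge_inj : Function.Injective edge
  edge_mem : ∀ i, edge i ∈ H
  mem_fst : ∀ i, vtx i ∈ edge i
  mem_snd : ∀ i, vtx (i + 1) ∈ edge i

/-- `d_C(u)`: the number of vertices of the Berge cycle `C` adjacent to `u`. -/
noncomputable def BergeCycle.dC {V : Type*} {H : Finset (Finset V)} {t : ℕ}
    (C : BergeCycle H t) (u : V) : ℕ :=
  {v | v ∈ Set.range C.vtx ∧ HAdj H u v}.ncard

/-- `H` contains a Hamiltonian Berge cycle, i.e. a Berge cycle whose
vertex set is all of `V`. -/
def HamiltonianBergeCycle {V : Type*} (H : Finset (Finset V)) : Prop :=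
  ∃ (t : ℕ) (C : BergeCycle H t), Set.range C.vtx = Set.univ

/-- A set `U` of indices of vertices of the Berge cycle `C` is usable for `u`:
(1) for every `i ∈ U` there is an edge in `E(u, v_{i-1}) - {e_{i-2}}`;
(2) any two distinct `i, j ∈ U` are non-consecutive on `C`;
(3) for every pair of distinct `i, j ∈ U` there are distinct edges
`e ∈ E(u, v_{i-1}) - {e_{i-2}}` and `e' ∈ E(u, v_{j-1}) - {e_{j-2}}`. -/
def Usable {V : Type*} {H : Finset (Finset V)} {t : ℕ} (C : BergeCycle H t) (u : V)
    (U : Set (ZMod t)) : Prop :=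
  (∀ i ∈ U, ∃ e ∈ H, e ≠ C.edge (i - 2) ∧ u ∈ e ∧ C.vtx (i - 1) ∈ e) ∧
  (∀ i ∈ U, ∀ j ∈ U, i ≠ j → j ≠ i + 1 ∧ j ≠ i - 1) ∧
  (∀ i ∈ U, ∀ j ∈ U, i ≠ j → ∃ e ∈ H, ∃ e' ∈ H, e ≠ e' ∧
    e ≠ C.edge (i - 2) ∧ u ∈ e ∧ C.vtx (i - 1) ∈ e ∧
    e' ≠ C.edge (j - 2) ∧ u ∈ e' ∧ C.vtx (j - 1) ∈ e')

/-- `CwBtw a b c` : on the cycle oriented clockwise, `b` lies strictly between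
`a` and `c` on the clockwise arc from `a` to `c`. -/
def CwBtw {t : ℕ} (a b c : ZMod t) : Prop :=
  0 < (b - a).val ∧ (b - a).val < (c - a).val

/-- `e` is an `(i,j;k)`-bridge of the Berge cycle `C`. -/
def IsBridge {V : Type*} [DecidableEq V] {H : Finset (Finset V)} {t : ℕ}
    (C : BergeCycle H t) (i j k : ZMod t) (e : Finset V) : Prop :=
  (CwBtw i k j ∧ ((e = C.edge (k + 1) ∧ e = {C.vtx i, C.vtx (k + 1), C.vtx (k + 2)}) ∨
                (e = C.edge (k - 1) ∧ e = {C.vtx j, C.vtx k, C.vtx (k - 1)}))) ∨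
  (CwBtw j k i ∧ ((e = C.edge (k - 1) ∧ e = {C.vtx i, C.vtx k, C.vtx (k - 1)}) ∨
                (e = C.edge (k + 1) ∧ e = {C.vtx j, C.vtx (k + 1), C.vtx (k + 2)})))

/-- `R(v_i, v_j)`: the set of bridges produced by the pair `{v_i, v_j}`,
i.e. all `(i,j;k)`-bridges over `k ∉ {i, j}`. -/
def RBridges {V : Type*} [DecidableEq V] {H : Finset (Finset V)} {t : ℕ}
    (C : BergeCycle H t) (i j : ZMod t) : Set (Finset V) :=
  {e | ∃ k : ZMod t, k ≠ i ∧ k ≠ j ∧ IsBridge C i j k e}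

lemma val_succ_lt_false {t : ℕ} [NeZero t] (x : ZMod t)
    (h0 : 0 < (x + 1).val) (h : (x + 1).val < x.val) : False := by
  have hx : ((x.val : ℕ) : ZMod t) = x := by
    simp [(ZMod.natCast_val x).trans (ZMod.cast_id t x)]
  have hxe : x + 1 = ((x.val + 1 : ℕ) : ZMod t) := by push_cast [hx]; ring
  rcases lt_or_eq_of_le (Nat.succ_le_of_lt (ZMod.val_lt x)) with hlt | heq
  · rw [hxe, ZMod.val_cast_of_lt hlt] at h; omega
  · have heq' : x.val + 1 = t := heq
    rw [hxe, heq', ZMod.natCast_self] at h0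
    simp [ZMod.val_zero] at h0

lemma neg_one_val_lt_false {t : ℕ} [NeZero t] (y : ZMod t)
    (h : (-1 : ZMod t).val < y.val) : False := by
  obtain ⟨n, rfl⟩ := Nat.exists_eq_succ_of_ne_zero (NeZero.ne t)
  rw [ZMod.val_neg_one] at h
  have := ZMod.val_lt y
  omega

lemma cwbtw_succ_false {t : ℕ} [NeZero t] {i m : ZMod t}
    (h : CwBtw i (m + 1) m) : False := by
  obtain ⟨h0, hlt⟩ := h
  have e1 : m + 1 - i = (m - i) + 1 := by ring
  rw [e1] at h0 hlt
  exact val_succ_lt_false (m - i) h0 hlt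

lemma cwbtw_pred_false {t : ℕ} [NeZero t] {m j : ZMod t}
    (h : CwBtw m (m - 1) j) : False := by
  obtain ⟨_, hlt⟩ := h
  have e1 : m - 1 - m = (-1 : ZMod t) := by ring
  rw [e1] at hlt
  exact neg_one_val_lt_false (j - m) hlt

lemma bridge_struct {V : Type*} [DecidableEq V] {H : Finset (Finset V)} {t : ℕ} [NeZero t]
    (C : BergeCycle H t) {i j k m0 : ZMod t} {e : Finset V}
    (hbr : IsBridge C i j k e) (hki : k ≠ i) (hkj : k ≠ j) (hm0 : e = C.edge m0) :
    ∃ a, (a = i ∨ a = j) ∧ e = {C.vtx a, C.vtx m0, C.vtx (m0 + 1)} ∧ a ≠ m0 := by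
  rcases hbr with ⟨hcw, ⟨he1, he2⟩ | ⟨he1, he2⟩⟩ | ⟨hcw, ⟨he1, he2⟩ | ⟨he1, he2⟩⟩
  · -- CwBtw i k j, e = edge (k+1) = {v i, v (k+1), v (k+2)}
    have hk1 : k + 1 = m0 := C.edge_inj (he1.symm.trans hm0)
    have hk : k = m0 - 1 := eq_sub_of_add_eq hk1
    have hk2 : k + 2 = m0 + 1 := by rw [← hk1]; ring
    refine ⟨i, Or.inl rfl, by rw [he2, hk1, hk2], ?_⟩
    rintro rfl
    rw [hk] at hcw
    exact (cwbtw_pred_false hcw).elim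
  · -- CwBtw i k j, e = edge (k-1) = {v j, v k, v (k-1)}
    have hk1 : k - 1 = m0 := C.edge_inj (he1.symm.trans hm0)
    have hk : k = m0 + 1 := by rw [← hk1]; ring
    refine ⟨j, Or.inr rfl, ?_, ?_⟩
    · rw [he2, hk1, hk]
      ext x; simp; tauto
    · rintro rfl
      rw [hk] at hcw
      exact (cwbtw_succ_false hcw).elim
  · -- CwBtw j k i, e = edge (k-1) = {v i, v k, v (k-1)}
    have hk1 : k - 1 = m0 := C.edge_inj (he1.symm.trans hm0)
    have hk : k = m0 + 1 := by rw [← hk1]; ring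
    refine ⟨i, Or.inl rfl, ?_, ?_⟩
    · rw [he2, hk1, hk]
      ext x; simp; tauto
    · rintro rfl
      rw [hk] at hcw
      exact (cwbtw_succ_false hcw).elim
  · -- CwBtw j k i, e = edge (k+1) = {v j, v (k+1), v (k+2)}
    have hk1 : k + 1 = m0 := C.edge_inj (he1.symm.trans hm0)
    have hk : k = m0 - 1 := eq_sub_of_add_eq hk1
    have hk2 : k + 2 = m0 + 1 := by rw [← hk1]; ring
    refine ⟨j, Or.inr rfl, by rw [he2, hk1, hk2], ?_⟩
    rintro rfl
    rw [hk] at hcw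
    exact (cwbtw_pred_false hcw).elim

theorem stmt8 {V : Type*} [Fintype V] [DecidableEq V] (H : Finset (Finset V))
    (h3 : IsThreeGraph H) {t : ℕ} (C : BergeCycle H t)
    (X : Set (ZMod t)) (e : Finset V) (he : e ∈ H) :
    {p : Finset (ZMod t) | ∃ i ∈ X, ∃ j ∈ X, i ≠ j ∧ p = {i, j} ∧
      e ∈ RBridges C i j}.ncard ≤ X.ncard - 1 := by
  set S : Set (Finset (ZMod t)) := {p : Finset (ZMod t) | ∃ i ∈ X, ∃ j ∈ X, i ≠ j ∧ p = {i, j} ∧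
      e ∈ RBridges C i j} with hSdef
  rcases S.eq_empty_or_nonempty with hE | ⟨p0, hp0⟩
  · rw [hE]; simp
  · -- t ≠ 0
    have ht0 : t ≠ 0 := by
      rintro rfl
      have : Finite (ZMod 0) := Finite.of_injective _ C.vtx_inj
      exact not_finite (ZMod 0)
    haveI : NeZero t := ⟨ht0⟩
    have hXfin : X.Finite := Set.toFinite X
    obtain ⟨i0, hi0, j0, hj0, hij0, hp0eq, hR0⟩ := hp0
    obtain ⟨k0, hk0i, hk0j, hbr0⟩ := hR0
    obtain ⟨m0, hm0⟩ : ∃ m, e = C.edge m := by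
      rcases hbr0 with ⟨_, ⟨h, _⟩ | ⟨h, _⟩⟩ | ⟨_, ⟨h, _⟩ | ⟨h, _⟩⟩ <;> exact ⟨_, h⟩
    -- common vertex
    have hanchor : ∃ x0, ∀ p ∈ S, x0 ∈ p := by
      by_cases hA : ∃ a, C.vtx a ∈ e ∧ C.vtx a ≠ C.vtx m0 ∧ C.vtx a ≠ C.vtx (m0 + 1)
      · obtain ⟨a, hae, ham, ham1⟩ := hA
        refine ⟨a, ?_⟩
        rintro p ⟨i, hi, j, hj, hij, rfl, k, hki, hkj, hbr⟩
        obtain ⟨a', ha', heq, -⟩ := bridge_struct C hbr hki hkj hm0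
        have : C.vtx a = C.vtx a' := by
          rw [heq] at hae
          simp only [Finset.mem_insert, Finset.mem_singleton] at hae
          tauto
        have haa : a = a' := C.vtx_inj this
        rcases ha' with rfl | rfl <;> simp [haa]
      · refine ⟨m0 + 1, ?_⟩
        rintro p ⟨i, hi, j, hj, hij, rfl, k, hki, hkj, hbr⟩
        obtain ⟨a, ha, heq, hne⟩ := bridge_struct C hbr hki hkj hm0
        push_neg at hA
        have hae : C.vtx a ∈ e := by rw [heq]; simp
        have := hA a hae
        have ha1 : a = m0 + 1 := by
          rcases Classical.em (C.vtx a = C.vtx m0) with h | h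
          · exact absurd (C.vtx_inj h) hne
          · exact C.vtx_inj (this h)
        rcases ha with rfl | rfl <;> simp [← ha1]
    obtain ⟨x0, hx0⟩ := hanchor
    have hp0S : p0 ∈ S := ⟨i0, hi0, j0, hj0, hij0, hp0eq, k0, hk0i, hk0j, hbr0⟩
    have hx0X : x0 ∈ X := by
      have := hx0 p0 hp0S
      rw [hp0eq] at this
      simp only [Finset.mem_insert, Finset.mem_singleton] at this
      rcases this with rfl | rfl <;> assumption
    have hsub : S ⊆ (fun b => ({x0, b} : Finset (ZMod t))) '' (X \ {x0}) := by
      rintro p hp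
      have hx0p := hx0 _ hp
      obtain ⟨i, hi, j, hj, hij, rfl, hR⟩ := hp
      simp only [Finset.mem_insert, Finset.mem_singleton] at hx0p
      rcases hx0p with rfl | rfl
      · exact ⟨j, ⟨hj, fun h => hij (id (Set.mem_singleton_iff.mp h)).symm⟩, rfl⟩
      · exact ⟨i, ⟨hi, fun h => hij (id (Set.mem_singleton_iff.mp h))⟩, by
          simp [Finset.pair_comm]⟩
    calc S.ncard ≤ ((fun b => ({x0, b} : Finset (ZMod t))) '' (X \ {x0})).ncard :=
          Set.ncard_le_ncard hsub (hXfin.diff.image _)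
      _ ≤ (X \ {x0}).ncard := Set.ncard_image_le hXfin.diff
      _ = X.ncard - 1 := Set.ncard_diff_singleton_of_mem hx0X
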